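/- There exists a function Q : ℤ → ℤ with Q(n) = 0 for all n ≤ 0, whose values at n = 1, …, 12 are, in order, 9, 0, 0, 0, 7, 9, 9, 10, 4, 9, 9, 3, which satisfies the Hofstadter Q-recurrence Q(n) = Q(n − Q(n−1)) + Q(n − Q(n−2)) for all n ≥ 13, and for which there exist a positive integer m, residues r and r′ with 0 ≤ r, r′ < m, integers A > 0, B, C, reals ρ > 1 and c > 0, and an integer k₀ such that Q(mk + r) = Ak² + Bk + C and Q(mk + r′) ≥ c·ρ^k for all k ≥ k₀. That is, this initial condition yields a solution to the Q-recurrence containing both a quadratic subsequence and an exponentially growing subsequence. -/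
import Mathlib

/-- The 12 initial values of the solution A275153. -/
def initVals12 : Fin 12 → ℤ :=
  ![9, 0, 0, 0, 7, 9, 9, 10, 4, 9, 9, 3]

/-- Closed form of the solution. -/
def Qf (n : ℤ) : ℤ :=
  if n ≤ 0 then 0 else
  if n = 1 then 9 else if n = 2 then 0 else if n = 3 then 0 else
  if n = 4 then 0 else if n = 5 then 7 else if n = 6 then 9 else
  if n = 7 then 9 else if n = 8 then 10 else if n = 9 then 4 else
  if n = 10 then 9 else if n = 11 then 9 else if n = 12 then 3 else
  if n % 18 = 13 then 9 else
  if n % 18 = 14 then 18*((n-14)/18)^2 + 27*((n-14)/18) + 16 else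
  if n % 18 = 15 then 9 else
  if n % 18 = 16 then 9 else
  if n % 18 = 17 then 20 * 4^((n-17)/18).toNat else
  if n % 18 = 0 then 4 else
  if n % 18 = 1 then 9 else
  if n % 18 = 2 then n - 2 else
  if n % 18 = 3 then 3 else
  if n % 18 = 4 then 9 else
  if n % 18 = 5 then 18*((n-23)/18)^2 + 45*((n-23)/18) + 34 else
  if n % 18 = 6 then 9 else
  if n % 18 = 7 then 9 else
  if n % 18 = 8 then 40 * 4^((n-26)/18).toNat else
  if n % 18 = 9 then 4 else
  if n % 18 = 10 then 9 else
  if n % 18 = 11 then n - 2 else 3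

lemma Qzero (n : ℤ) (h : n ≤ 0) : Qf n = 0 := by
  unfold Qf; rw [if_pos h]

lemma Qf3 : Qf 3 = 0 := by decide
lemma Qf4 : Qf 4 = 0 := by decide

lemma Qr13 (k : ℕ) : Qf (13 + 18*(k:ℤ)) = 9 := by
  unfold Qf
  repeat rw [if_neg (by omega)]
  rw [if_pos (by omega)]

lemma Qr14 (k : ℕ) : Qf (14 + 18*(k:ℤ)) = 18*(k:ℤ)^2 + 27*k + 16 := by
  unfold Qf
  repeat rw [if_neg (by omega)]
  rw [if_pos (by omega), show (14 + 18*(k:ℤ) - 14)/18 = (k:ℤ) by omega]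

lemma Qr15 (k : ℕ) : Qf (15 + 18*(k:ℤ)) = 9 := by
  unfold Qf
  repeat rw [if_neg (by omega)]
  rw [if_pos (by omega)]

lemma Qr16 (k : ℕ) : Qf (16 + 18*(k:ℤ)) = 9 := by
  unfold Qf
  repeat rw [if_neg (by omega)]
  rw [if_pos (by omega)]

lemma Qr17 (k : ℕ) : Qf (17 + 18*(k:ℤ)) = 20 * 4^k := by
  unfold Qf
  repeat rw [if_neg (by omega)]
  rw [if_pos (by omega), show (17 + 18*(k:ℤ) - 17)/18 = (k:ℤ) by omega]
  simp

lemma Qr18 (k : ℕ) : Qf (18 + 18*(k:ℤ)) = 4 := by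
  unfold Qf
  repeat rw [if_neg (by omega)]
  rw [if_pos (by omega)]

lemma Qr19 (k : ℕ) : Qf (19 + 18*(k:ℤ)) = 9 := by
  unfold Qf
  repeat rw [if_neg (by omega)]
  rw [if_pos (by omega)]

lemma Qr20 (k : ℕ) : Qf (20 + 18*(k:ℤ)) = 18 + 18*k := by
  unfold Qf
  repeat rw [if_neg (by omega)]
  rw [if_pos (by omega)]; ring

lemma Qr21 (k : ℕ) : Qf (21 + 18*(k:ℤ)) = 3 := by
  unfold Qf
  repeat rw [if_neg (by omega)]
  rw [if_pos (by omega)]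

lemma Qr22 (k : ℕ) : Qf (22 + 18*(k:ℤ)) = 9 := by
  unfold Qf
  repeat rw [if_neg (by omega)]
  rw [if_pos (by omega)]

lemma Qr23 (k : ℕ) : Qf (23 + 18*(k:ℤ)) = 18*(k:ℤ)^2 + 45*k + 34 := by
  unfold Qf
  repeat rw [if_neg (by omega)]
  rw [if_pos (by omega), show (23 + 18*(k:ℤ) - 23)/18 = (k:ℤ) by omega]

lemma Qr24 (k : ℕ) : Qf (24 + 18*(k:ℤ)) = 9 := by
  unfold Qf
  repeat rw [if_neg (by omega)]
  rw [if_pos (by omega)]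

lemma Qr25 (k : ℕ) : Qf (25 + 18*(k:ℤ)) = 9 := by
  unfold Qf
  repeat rw [if_neg (by omega)]
  rw [if_pos (by omega)]

lemma Qr26 (k : ℕ) : Qf (26 + 18*(k:ℤ)) = 40 * 4^k := by
  unfold Qf
  repeat rw [if_neg (by omega)]
  rw [if_pos (by omega), show (26 + 18*(k:ℤ) - 26)/18 = (k:ℤ) by omega]
  simp

lemma Qr27 (k : ℕ) : Qf (27 + 18*(k:ℤ)) = 4 := by
  unfold Qf
  repeat rw [if_neg (by omega)]
  rw [if_pos (by omega)]

lemma Qr28 (k : ℕ) : Qf (28 + 18*(k:ℤ)) = 9 := by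
  unfold Qf
  repeat rw [if_neg (by omega)]
  rw [if_pos (by omega)]

lemma Qr29 (k : ℕ) : Qf (29 + 18*(k:ℤ)) = 27 + 18*k := by
  unfold Qf
  repeat rw [if_neg (by omega)]
  rw [if_pos (by omega)]; ring

lemma Qr30 (k : ℕ) : Qf (30 + 18*(k:ℤ)) = 3 := by
  unfold Qf
  repeat rw [if_neg (by omega)]

/- evaluation lemmas with small bases (formula extends to the initial segment) -/

lemma Qr5 (k : ℕ) : Qf (5 + 18*(k:ℤ)) = 18*(k:ℤ)^2 + 9*k + 7 := by
  match k with
  | 0 => decide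
  | (k+1) =>
    rw [show (5 + 18*(((k:ℕ)+1:ℕ):ℤ)) = 23 + 18*(k:ℤ) by push_cast; ring, Qr23 k]
    push_cast; ring

lemma Qr6 (k : ℕ) : Qf (6 + 18*(k:ℤ)) = 9 := by
  match k with
  | 0 => decide
  | (k+1) => rw [show (6 + 18*(((k:ℕ)+1:ℕ):ℤ)) = 24 + 18*(k:ℤ) by push_cast; ring]; exact Qr24 k

lemma Qr7 (k : ℕ) : Qf (7 + 18*(k:ℤ)) = 9 := by
  match k with
  | 0 => decide
  | (k+1) => rw [show (7 + 18*(((k:ℕ)+1:ℕ):ℤ)) = 25 + 18*(k:ℤ) by push_cast; ring]; exact Qr25 k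

lemma Qr8 (k : ℕ) : Qf (8 + 18*(k:ℤ)) = 10 * 4^k := by
  match k with
  | 0 => decide
  | (k+1) =>
    rw [show (8 + 18*(((k:ℕ)+1:ℕ):ℤ)) = 26 + 18*(k:ℤ) by push_cast; ring, Qr26 k,
      pow_succ]
    ring

lemma Qr9 (k : ℕ) : Qf (9 + 18*(k:ℤ)) = 4 := by
  match k with
  | 0 => decide
  | (k+1) => rw [show (9 + 18*(((k:ℕ)+1:ℕ):ℤ)) = 27 + 18*(k:ℤ) by push_cast; ring]; exact Qr27 k

lemma Qr10 (k : ℕ) : Qf (10 + 18*(k:ℤ)) = 9 := by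
  match k with
  | 0 => decide
  | (k+1) => rw [show (10 + 18*(((k:ℕ)+1:ℕ):ℤ)) = 28 + 18*(k:ℤ) by push_cast; ring]; exact Qr28 k

lemma Qr11 (k : ℕ) : Qf (11 + 18*(k:ℤ)) = 9 + 18*k := by
  match k with
  | 0 => decide
  | (k+1) =>
    rw [show (11 + 18*(((k:ℕ)+1:ℕ):ℤ)) = 29 + 18*(k:ℤ) by push_cast; ring, Qr29 k]
    push_cast; ring

lemma Qr12 (k : ℕ) : Qf (12 + 18*(k:ℤ)) = 3 := by
  match k with
  | 0 => decide
  | (k+1) => rw [show (12 + 18*(((k:ℕ)+1:ℕ):ℤ)) = 30 + 18*(k:ℤ) by push_cast; ring]; exact Qr30 k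

lemma exp_bound (k : ℕ) : 18*(k:ℤ) + 19 ≤ 20 * 4^k := by
  induction k with
  | zero => norm_num
  | succ k ih =>
    have h4 : (20:ℤ) * 4^(k+1) = 4 * (20 * 4^k) := by ring
    push_cast
    push_cast at ih
    nlinarith

/-- The recurrence. -/
lemma Qrec (n : ℤ) (hn : 13 ≤ n) : Qf n = Qf (n - Qf (n-1)) + Qf (n - Qf (n-2)) := by
  have h18 : n % 18 = 0 ∨ n % 18 = 1 ∨ n % 18 = 2 ∨ n % 18 = 3 ∨ n % 18 = 4 ∨
      n % 18 = 5 ∨ n % 18 = 6 ∨ n % 18 = 7 ∨ n % 18 = 8 ∨ n % 18 = 9 ∨ n % 18 = 10 ∨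
      n % 18 = 11 ∨ n % 18 = 12 ∨ n % 18 = 13 ∨ n % 18 = 14 ∨ n % 18 = 15 ∨
      n % 18 = 16 ∨ n % 18 = 17 := by omega
  rcases h18 with h|h|h|h|h|h|h|h|h|h|h|h|h|h|h|h|h|h
  · -- n = 18 + 18k
    obtain ⟨k, hk⟩ : ∃ k : ℕ, n = 18 + 18*(k:ℤ) := ⟨(n-18).toNat/18, by omega⟩
    subst hk
    rw [show (18:ℤ) + 18*(k:ℤ) - 1 = 17 + 18*(k:ℤ) by ring, Qr17 k,
        show (18:ℤ) + 18*(k:ℤ) - 2 = 16 + 18*(k:ℤ) by ring, Qr16 k,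
        show (18:ℤ) + 18*(k:ℤ) - 9 = 9 + 18*(k:ℤ) by ring, Qr9 k, Qr18 k,
        Qzero (18 + 18*(k:ℤ) - 20*4^k) (by have := exp_bound k; linarith)]
    norm_num
  · -- n = 19 + 18k
    obtain ⟨k, hk⟩ : ∃ k : ℕ, n = 19 + 18*(k:ℤ) := ⟨(n-19).toNat/18, by omega⟩
    subst hk
    rw [show (19:ℤ) + 18*(k:ℤ) - 1 = 18 + 18*(k:ℤ) by ring, Qr18 k,
        show (19:ℤ) + 18*(k:ℤ) - 2 = 17 + 18*(k:ℤ) by ring, Qr17 k,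
        show (19:ℤ) + 18*(k:ℤ) - 4 = 15 + 18*(k:ℤ) by ring, Qr15 k, Qr19 k,
        Qzero (19 + 18*(k:ℤ) - 20*4^k) (by have := exp_bound k; linarith)]
    norm_num
  · -- n = 20 + 18k
    obtain ⟨k, hk⟩ : ∃ k : ℕ, n = 20 + 18*(k:ℤ) := ⟨(n-20).toNat/18, by omega⟩
    subst hk
    rw [show (20:ℤ) + 18*(k:ℤ) - 1 = 19 + 18*(k:ℤ) by ring, Qr19 k,
        show (20:ℤ) + 18*(k:ℤ) - 2 = 18 + 18*(k:ℤ) by ring, Qr18 k,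
        show (20:ℤ) + 18*(k:ℤ) - 9 = 11 + 18*(k:ℤ) by ring, Qr11 k,
        show (20:ℤ) + 18*(k:ℤ) - 4 = 16 + 18*(k:ℤ) by ring, Qr16 k, Qr20 k]
    ring
  · -- n = 21 + 18k
    obtain ⟨k, hk⟩ : ∃ k : ℕ, n = 21 + 18*(k:ℤ) := ⟨(n-21).toNat/18, by omega⟩
    subst hk
    rw [show (21:ℤ) + 18*(k:ℤ) - 1 = 20 + 18*(k:ℤ) by ring, Qr20 k,
        show (21:ℤ) + 18*(k:ℤ) - 2 = 19 + 18*(k:ℤ) by ring, Qr19 k,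
        show (21:ℤ) + 18*(k:ℤ) - (18 + 18*(k:ℤ)) = 3 by ring, Qf3,
        show (21:ℤ) + 18*(k:ℤ) - 9 = 12 + 18*(k:ℤ) by ring, Qr12 k, Qr21 k]
    norm_num
  · -- n = 22 + 18k
    obtain ⟨k, hk⟩ : ∃ k : ℕ, n = 22 + 18*(k:ℤ) := ⟨(n-22).toNat/18, by omega⟩
    subst hk
    rw [show (22:ℤ) + 18*(k:ℤ) - 1 = 21 + 18*(k:ℤ) by ring, Qr21 k,
        show (22:ℤ) + 18*(k:ℤ) - 2 = 20 + 18*(k:ℤ) by ring, Qr20 k,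
        show (22:ℤ) + 18*(k:ℤ) - 3 = 19 + 18*(k:ℤ) by ring, Qr19 k,
        show (22:ℤ) + 18*(k:ℤ) - (18 + 18*(k:ℤ)) = 4 by ring, Qf4, Qr22 k]
    norm_num
  · -- n = 23 + 18k
    obtain ⟨k, hk⟩ : ∃ k : ℕ, n = 23 + 18*(k:ℤ) := ⟨(n-23).toNat/18, by omega⟩
    subst hk
    rw [show (23:ℤ) + 18*(k:ℤ) - 1 = 22 + 18*(k:ℤ) by ring, Qr22 k,
        show (23:ℤ) + 18*(k:ℤ) - 2 = 21 + 18*(k:ℤ) by ring, Qr21 k,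
        show (23:ℤ) + 18*(k:ℤ) - 9 = 14 + 18*(k:ℤ) by ring, Qr14 k,
        show (23:ℤ) + 18*(k:ℤ) - 3 = 20 + 18*(k:ℤ) by ring, Qr20 k, Qr23 k]
    ring
  · -- n = 24 + 18k
    obtain ⟨k, hk⟩ : ∃ k : ℕ, n = 24 + 18*(k:ℤ) := ⟨(n-24).toNat/18, by omega⟩
    subst hk
    rw [show (24:ℤ) + 18*(k:ℤ) - 1 = 23 + 18*(k:ℤ) by ring, Qr23 k,
        show (24:ℤ) + 18*(k:ℤ) - 2 = 22 + 18*(k:ℤ) by ring, Qr22 k,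
        show (24:ℤ) + 18*(k:ℤ) - 9 = 15 + 18*(k:ℤ) by ring, Qr15 k, Qr24 k,
        Qzero (24 + 18*(k:ℤ) - (18*(k:ℤ)^2 + 45*k + 34))
          (by nlinarith [sq_nonneg (k:ℤ), Int.natCast_nonneg k])]
    norm_num
  · -- n = 25 + 18k
    obtain ⟨k, hk⟩ : ∃ k : ℕ, n = 25 + 18*(k:ℤ) := ⟨(n-25).toNat/18, by omega⟩
    subst hk
    rw [show (25:ℤ) + 18*(k:ℤ) - 1 = 24 + 18*(k:ℤ) by ring, Qr24 k,
        show (25:ℤ) + 18*(k:ℤ) - 2 = 23 + 18*(k:ℤ) by ring, Qr23 k,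
        show (25:ℤ) + 18*(k:ℤ) - 9 = 16 + 18*(k:ℤ) by ring, Qr16 k, Qr25 k,
        Qzero (25 + 18*(k:ℤ) - (18*(k:ℤ)^2 + 45*k + 34))
          (by nlinarith [sq_nonneg (k:ℤ), Int.natCast_nonneg k])]
    norm_num
  · -- n = 26 + 18k
    obtain ⟨k, hk⟩ : ∃ k : ℕ, n = 26 + 18*(k:ℤ) := ⟨(n-26).toNat/18, by omega⟩
    subst hk
    rw [show (26:ℤ) + 18*(k:ℤ) - 1 = 25 + 18*(k:ℤ) by ring, Qr25 k,
        show (26:ℤ) + 18*(k:ℤ) - 2 = 24 + 18*(k:ℤ) by ring, Qr24 k,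
        show (26:ℤ) + 18*(k:ℤ) - 9 = 17 + 18*(k:ℤ) by ring, Qr17 k, Qr26 k]
    ring
  · -- n = 27 + 18k
    obtain ⟨k, hk⟩ : ∃ k : ℕ, n = 27 + 18*(k:ℤ) := ⟨(n-27).toNat/18, by omega⟩
    subst hk
    rw [show (27:ℤ) + 18*(k:ℤ) - 1 = 26 + 18*(k:ℤ) by ring, Qr26 k,
        show (27:ℤ) + 18*(k:ℤ) - 2 = 25 + 18*(k:ℤ) by ring, Qr25 k,
        show (27:ℤ) + 18*(k:ℤ) - 9 = 18 + 18*(k:ℤ) by ring, Qr18 k, Qr27 k,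
        Qzero (27 + 18*(k:ℤ) - 40*4^k) (by have := exp_bound k; linarith)]
    norm_num
  · -- n = 28 + 18k
    obtain ⟨k, hk⟩ : ∃ k : ℕ, n = 28 + 18*(k:ℤ) := ⟨(n-28).toNat/18, by omega⟩
    subst hk
    rw [show (28:ℤ) + 18*(k:ℤ) - 1 = 27 + 18*(k:ℤ) by ring, Qr27 k,
        show (28:ℤ) + 18*(k:ℤ) - 2 = 26 + 18*(k:ℤ) by ring, Qr26 k,
        show (28:ℤ) + 18*(k:ℤ) - 4 = 24 + 18*(k:ℤ) by ring, Qr24 k, Qr28 k,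
        Qzero (28 + 18*(k:ℤ) - 40*4^k) (by have := exp_bound k; linarith)]
    norm_num
  · -- n = 29 + 18k
    obtain ⟨k, hk⟩ : ∃ k : ℕ, n = 29 + 18*(k:ℤ) := ⟨(n-29).toNat/18, by omega⟩
    subst hk
    rw [show (29:ℤ) + 18*(k:ℤ) - 1 = 28 + 18*(k:ℤ) by ring, Qr28 k,
        show (29:ℤ) + 18*(k:ℤ) - 2 = 27 + 18*(k:ℤ) by ring, Qr27 k,
        show (29:ℤ) + 18*(k:ℤ) - 9 = 20 + 18*(k:ℤ) by ring, Qr20 k,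
        show (29:ℤ) + 18*(k:ℤ) - 4 = 25 + 18*(k:ℤ) by ring, Qr25 k, Qr29 k]
    ring
  · -- n = 30 + 18k
    obtain ⟨k, hk⟩ : ∃ k : ℕ, n = 30 + 18*(k:ℤ) := ⟨(n-30).toNat/18, by omega⟩
    subst hk
    rw [show (30:ℤ) + 18*(k:ℤ) - 1 = 29 + 18*(k:ℤ) by ring, Qr29 k,
        show (30:ℤ) + 18*(k:ℤ) - 2 = 28 + 18*(k:ℤ) by ring, Qr28 k,
        show (30:ℤ) + 18*(k:ℤ) - (27 + 18*(k:ℤ)) = 3 by ring, Qf3,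
        show (30:ℤ) + 18*(k:ℤ) - 9 = 21 + 18*(k:ℤ) by ring, Qr21 k, Qr30 k]
    norm_num
  · -- n = 13 + 18k
    obtain ⟨k, hk⟩ : ∃ k : ℕ, n = 13 + 18*(k:ℤ) := ⟨(n-13).toNat/18, by omega⟩
    subst hk
    rw [show (13:ℤ) + 18*(k:ℤ) - 1 = 12 + 18*(k:ℤ) by ring, Qr12 k,
        show (13:ℤ) + 18*(k:ℤ) - 2 = 11 + 18*(k:ℤ) by ring, Qr11 k,
        show (13:ℤ) + 18*(k:ℤ) - 3 = 10 + 18*(k:ℤ) by ring, Qr10 k,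
        show (13:ℤ) + 18*(k:ℤ) - (9 + 18*(k:ℤ)) = 4 by ring, Qf4, Qr13 k]
    norm_num
  · -- n = 14 + 18k
    obtain ⟨k, hk⟩ : ∃ k : ℕ, n = 14 + 18*(k:ℤ) := ⟨(n-14).toNat/18, by omega⟩
    subst hk
    rw [show (14:ℤ) + 18*(k:ℤ) - 1 = 13 + 18*(k:ℤ) by ring, Qr13 k,
        show (14:ℤ) + 18*(k:ℤ) - 2 = 12 + 18*(k:ℤ) by ring, Qr12 k,
        show (14:ℤ) + 18*(k:ℤ) - 9 = 5 + 18*(k:ℤ) by ring, Qr5 k,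
        show (14:ℤ) + 18*(k:ℤ) - 3 = 11 + 18*(k:ℤ) by ring, Qr11 k, Qr14 k]
    ring
  · -- n = 15 + 18k
    obtain ⟨k, hk⟩ : ∃ k : ℕ, n = 15 + 18*(k:ℤ) := ⟨(n-15).toNat/18, by omega⟩
    subst hk
    rw [show (15:ℤ) + 18*(k:ℤ) - 1 = 14 + 18*(k:ℤ) by ring, Qr14 k,
        show (15:ℤ) + 18*(k:ℤ) - 2 = 13 + 18*(k:ℤ) by ring, Qr13 k,
        show (15:ℤ) + 18*(k:ℤ) - 9 = 6 + 18*(k:ℤ) by ring, Qr6 k, Qr15 k,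
        Qzero (15 + 18*(k:ℤ) - (18*(k:ℤ)^2 + 27*k + 16))
          (by nlinarith [sq_nonneg (k:ℤ), Int.natCast_nonneg k])]
    norm_num
  · -- n = 16 + 18k
    obtain ⟨k, hk⟩ : ∃ k : ℕ, n = 16 + 18*(k:ℤ) := ⟨(n-16).toNat/18, by omega⟩
    subst hk
    rw [show (16:ℤ) + 18*(k:ℤ) - 1 = 15 + 18*(k:ℤ) by ring, Qr15 k,
        show (16:ℤ) + 18*(k:ℤ) - 2 = 14 + 18*(k:ℤ) by ring, Qr14 k,
        show (16:ℤ) + 18*(k:ℤ) - 9 = 7 + 18*(k:ℤ) by ring, Qr7 k, Qr16 k,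
        Qzero (16 + 18*(k:ℤ) - (18*(k:ℤ)^2 + 27*k + 16))
          (by nlinarith [sq_nonneg (k:ℤ), Int.natCast_nonneg k])]
    norm_num
  · -- n = 17 + 18k
    obtain ⟨k, hk⟩ : ∃ k : ℕ, n = 17 + 18*(k:ℤ) := ⟨(n-17).toNat/18, by omega⟩
    subst hk
    rw [show (17:ℤ) + 18*(k:ℤ) - 1 = 16 + 18*(k:ℤ) by ring, Qr16 k,
        show (17:ℤ) + 18*(k:ℤ) - 2 = 15 + 18*(k:ℤ) by ring, Qr15 k,
        show (17:ℤ) + 18*(k:ℤ) - 9 = 8 + 18*(k:ℤ) by ring, Qr8 k, Qr17 k]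
    ring

/-- The Hofstadter Q-recurrence admits a solution, given by the length-12
initial condition listed above, containing both a quadratic subsequence and an
exponentially growing subsequence. -/
theorem quadratic_and_exponential_solution :
    ∃ Q : ℤ → ℤ,
      (∀ n : ℤ, n ≤ 0 → Q n = 0) ∧
      (∀ i : Fin 12, Q ((i : ℕ) + 1 : ℤ) = initVals12 i) ∧
      (∀ n : ℤ, 13 ≤ n → Q n = Q (n - Q (n - 1)) + Q (n - Q (n - 2))) ∧
      (∃ m r r' : ℕ, 0 < m ∧ r < m ∧ r' < m ∧
        ∃ A B C : ℤ, 0 < A ∧ ∃ ρ c : ℝ, 1 < ρ ∧ 0 < c ∧ ∃ k₀ : ℕ,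
          ∀ k : ℕ, k₀ ≤ k →
            Q ((m : ℤ) * k + r) = A * (k : ℤ) ^ 2 + B * k + C ∧
            c * ρ ^ k ≤ (Q ((m : ℤ) * k + r') : ℝ)) := by
  refine ⟨Qf, Qzero, ?_, Qrec, 18, 14, 17, by norm_num, by norm_num, by norm_num,
    18, 27, 16, by norm_num, 4, 20, by norm_num, by norm_num, 0, ?_⟩
  · intro i
    fin_cases i <;> decide
  · intro k _
    constructor
    · rw [show ((18:ℕ):ℤ) * (k:ℤ) + ((14:ℕ):ℤ) = 14 + 18*(k:ℤ) by push_cast; ring, Qr14 k]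
    · rw [show ((18:ℕ):ℤ) * (k:ℤ) + ((17:ℕ):ℤ) = 17 + 18*(k:ℤ) by push_cast; ring, Qr17 k]
      push_cast
      norm_num
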